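/- The Diophantine equation 39x² + 48xy + 39y² = u² has no nontrivial integer solutions: if x, y, u are integers with 39x² + 48xy + 39y² = u², then x = 0 and y = 0 (and hence u = 0). -/

import Mathlib

lemma key27 : ∀ a b c : ZMod 27, 39 * a ^ 2 + 48 * a * b + 39 * b ^ 2 = c ^ 2 →
    (ZMod.castHom (by norm_num : (3:ℕ) ∣ 27) (ZMod 3) a = 0 ∧
     ZMod.castHom (by norm_num : (3:ℕ) ∣ 27) (ZMod 3) b = 0 ∧
     ZMod.castHom (by norm_num : (3:ℕ) ∣ 27) (ZMod 3) c = 0) := by decide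

lemma keyInt (x y u : ℤ) (h : 39 * x ^ 2 + 48 * x * y + 39 * y ^ 2 = u ^ 2) :
    3 ∣ x ∧ 3 ∣ y ∧ 3 ∣ u := by
  have h27 : (39 * (x:ZMod 27) ^ 2 + 48 * x * y + 39 * y ^ 2 : ZMod 27) = (u:ZMod 27) ^ 2 := by
    have := congrArg (Int.cast : ℤ → ZMod 27) h
    push_cast at this
    simpa only [Int.cast_pow] using this
  obtain ⟨ha, hb, hc⟩ := key27 x y u h27
  rw [map_intCast, ZMod.intCast_zmod_eq_zero_iff_dvd] at ha hb hc
  exact ⟨by exact_mod_cast ha, by exact_mod_cast hb, by exact_mod_cast hc⟩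

lemma descent : ∀ n : ℕ, ∀ x y u : ℤ, x.natAbs + y.natAbs = n →
    39 * x ^ 2 + 48 * x * y + 39 * y ^ 2 = u ^ 2 → x = 0 ∧ y = 0 ∧ u = 0 := by
  intro n
  induction n using Nat.strong_induction_on with
  | _ n ih =>
    intro x y u hn h
    rcases eq_or_ne n 0 with rfl | hne
    · have hx : x = 0 := by omega
      have hy : y = 0 := by omega
      subst hx; subst hy
      refine ⟨rfl, rfl, ?_⟩
      nlinarith [sq_nonneg u]
    · obtain ⟨⟨a, rfl⟩, ⟨b, rfl⟩, ⟨c, rfl⟩⟩ := keyInt x y u h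
      have h' : 39 * a ^ 2 + 48 * a * b + 39 * b ^ 2 = c ^ 2 := by nlinarith
      have hm : a.natAbs + b.natAbs < n := by
        have h3a : (3 * a).natAbs = 3 * a.natAbs := by simp [Int.natAbs_mul]
        have h3b : (3 * b).natAbs = 3 * b.natAbs := by simp [Int.natAbs_mul]
        omega
      obtain ⟨ha, hb, hc⟩ := ih _ hm a b c rfl h'
      exact ⟨by rw [ha]; ring, by rw [hb]; ring, by rw [hc]; ring⟩

theorem stmt_1 (x y u : ℤ) (h : 39 * x ^ 2 + 48 * x * y + 39 * y ^ 2 = u ^ 2) :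
    x = 0 ∧ y = 0 ∧ u = 0 := by
  exact descent _ x y u rfl h
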